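/- Let K be a compact Hausdorff space. The Banach space C(K) of continuous real-valued functions on K has the Daugavet property if and only if K has no isolated points. Moreover, if K has an isolated point a, then there exists y ∈ S_{C(K)} (namely the indicator of {a}) such that for every f ∈ B_{C(K)}, min(‖y + f‖, ‖y − f‖) ≤ 1. -/
import Mathlib


universe u

/-- A slice of the closed unit ball of `X`. -/
def ballSlice {X : Type u} [NormedAddCommGroup X] [NormedSpace ℝ X]
    (f : X →L[ℝ] ℝ) (a : ℝ) : Set X :=
  {x | ‖x‖ ≤ 1 ∧ ‖f‖ - a < f x}

/-- The Daugavet property in the slice formulation. -/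
def HasDaugavetProp (X : Type u) [NormedAddCommGroup X] [NormedSpace ℝ X] : Prop :=
  ∀ y : X, ‖y‖ = 1 →
    ∀ (f : X →L[ℝ] ℝ) (a : ℝ), 0 < a → ∀ ε : ℝ, 0 < ε →
      ∃ x ∈ ballSlice f a, 2 - ε < ‖y + x‖

set_option linter.unusedSectionVars false

variable {K : Type u} [TopologicalSpace K] [CompactSpace K] [T2Space K]

lemma open_infinite_of_no_isolated (hK : ∀ x : K, ¬ IsOpen ({x} : Set K))
    {V : Set K} (hV : IsOpen V) (hne : V.Nonempty) : V.Infinite := by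
  intro hfin
  obtain ⟨t0, ht0⟩ := hne
  have hcl : IsClosed (V \ {t0}) := (hfin.subset Set.diff_subset).isClosed
  refine hK t0 ?_
  have : ({t0} : Set K) = V ∩ (V \ {t0})ᶜ := by
    ext x
    constructor
    · rintro rfl; exact ⟨ht0, by simp⟩
    · rintro ⟨hxV, hx⟩
      simp only [Set.mem_compl_iff, Set.mem_diff, Set.mem_singleton_iff, not_and, not_not] at hx
      exact hx hxV
  rw [this]
  exact hV.inter hcl.isOpen_compl

lemma exists_light_point (f : C(K, ℝ) →L[ℝ] ℝ) {V : Set K} (hV : IsOpen V)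
    (hVinf : V.Infinite) {δ : ℝ} (hδ : 0 < δ) :
    ∃ t1 ∈ V, ∃ W : Set K, IsOpen W ∧ t1 ∈ W ∧ W ⊆ V ∧
      ∀ h : C(K, ℝ), ‖h‖ ≤ 1 → (∀ t ∉ W, h t = 0) → f h < δ := by
  by_contra hcon
  push_neg at hcon
  obtain ⟨n, hn⟩ := Archimedean.arch (‖f‖ + 1) hδ
  have hnδ : ‖f‖ < n • δ := lt_of_lt_of_le (lt_add_of_pos_right _ one_pos) hn
  obtain ⟨s, hsV, hcard⟩ := hVinf.exists_subset_card_eq n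
  obtain ⟨U, hU, hdisj⟩ := (s.finite_toSet).t2_separation
  have key : ∀ t ∈ s, ∃ h : C(K, ℝ), ‖h‖ ≤ 1 ∧ (∀ x ∉ U t ∩ V, h x = 0) ∧ δ ≤ f h := by
    intro t ht
    have htV : t ∈ V := hsV ht
    obtain ⟨h, h1, h2, h3⟩ := hcon t htV (U t ∩ V) ((hU t).2.inter hV)
      ⟨(hU t).1, htV⟩ Set.inter_subset_right
    exact ⟨h, h1, h2, h3⟩
  choose h hh1 hh2 hh3 using key
  set g : C(K, ℝ) := ∑ t ∈ s.attach, h t t.2 with hg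
  have hgx : ∀ x : K, ‖g x‖ ≤ 1 := by
    intro x
    have hgapp : g x = ∑ t ∈ s.attach, h t t.2 x := by
      rw [hg]; simp [ContinuousMap.coe_sum, Finset.sum_apply]
    by_cases hx : ∃ t : {t // t ∈ s}, t ∈ s.attach ∧ x ∈ U t.1
    · obtain ⟨t, hts, hxt⟩ := hx
      have : g x = h t t.2 x := by
        rw [hgapp]
        refine Finset.sum_eq_single_of_mem t hts ?_
        intro b hbs hbt
        refine hh2 b b.2 x ?_
        rintro ⟨hxb, -⟩
        have : Disjoint (U b.1) (U t.1) := hdisj b.2 t.2 (fun hc => hbt (Subtype.ext hc))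
        exact this.ne_of_mem hxb hxt rfl
      rw [this]
      exact le_trans (ContinuousMap.norm_coe_le_norm _ x) (hh1 t t.2)
    · push_neg at hx
      have : g x = 0 := by
        rw [hgapp]
        refine Finset.sum_eq_zero fun t hts => hh2 t t.2 x fun hc => hx t hts hc.1
      simp [this]
  have hgnorm : ‖g‖ ≤ 1 := (ContinuousMap.norm_le _ zero_le_one).2 hgx
  have hfg : f g ≤ ‖f‖ := by
    calc f g ≤ |f g| := le_abs_self _
    _ ≤ ‖f‖ * ‖g‖ := f.le_opNorm g
    _ ≤ ‖f‖ * 1 := by gcongr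
    _ = ‖f‖ := mul_one _
  have hsum : (n : ℕ) • δ ≤ f g := by
    have hfg2 : f g = ∑ t ∈ s.attach, f (h t t.2) := by rw [hg]; simp [map_sum]
    rw [hfg2]
    have := Finset.card_nsmul_le_sum s.attach (fun t => f (h t t.2)) δ
      (fun t _ => hh3 t t.2)
    simpa [Finset.card_attach, hcard] using this
  linarith [lt_of_lt_of_le hnδ hsum]

lemma daugavet_of_no_isolated (hK : ∀ x : K, ¬ IsOpen ({x} : Set K)) :
    HasDaugavetProp C(K, ℝ) := by
  intro y hy f a ha ε hε
  haveI : Nonempty K := by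
    by_contra hne
    rw [not_nonempty_iff] at hne
    have : y = 0 := by ext x; exact (hne.false x).elim
    rw [this, norm_zero] at hy
    norm_num at hy
  -- maximum point of |y|
  obtain ⟨t0, -, ht0⟩ := isCompact_univ.exists_isMaxOn Set.univ_nonempty
    ((map_continuous y).abs.continuousOn (s := Set.univ))
  have hyt0 : |y t0| = 1 := by
    refine le_antisymm (by simpa [Real.norm_eq_abs, hy] using ContinuousMap.norm_coe_le_norm y t0) ?_
    rw [← hy]
    exact (ContinuousMap.norm_le _ (abs_nonneg _)).2 fun t => by
      simpa [Real.norm_eq_abs] using ht0 (Set.mem_univ t)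
  -- the open set V
  set V : Set K := {t | 1 - ε < |y t|} with hVdef
  have hVopen : IsOpen V := isOpen_lt continuous_const (map_continuous y).abs
  have hVne : V.Nonempty := ⟨t0, by simp only [hVdef, Set.mem_setOf_eq, hyt0]; linarith⟩
  have hVinf := open_infinite_of_no_isolated hK hVopen hVne
  -- light point
  obtain ⟨t1, ht1V, W, hWopen, ht1W, hWV, hlight⟩ :=
    exists_light_point f hVopen hVinf (δ := a / 8) (by linarith)
  -- point of the slice, almost attaining the norm
  have hr : ‖f‖ - a / 4 < ‖f‖ := by linarith
  obtain ⟨x', hx'1, hx'2⟩ := f.exists_lt_apply_of_lt_opNorm hr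
  have hx0 : ∃ x0 : C(K, ℝ), ‖x0‖ ≤ 1 ∧ ‖f‖ - a / 4 < f x0 := by
    rcases le_or_gt 0 (f x') with hs | hs
    · exact ⟨x', hx'1.le, by rwa [Real.norm_eq_abs, abs_of_nonneg hs] at hx'2⟩
    · refine ⟨-x', by rw [norm_neg]; exact hx'1.le, ?_⟩
      rw [map_neg]
      rwa [Real.norm_eq_abs, abs_of_neg hs] at hx'2
  obtain ⟨x0, hx01, hx02⟩ := hx0
  have hx0t : ∀ t, |x0 t| ≤ 1 := fun t => le_trans (ContinuousMap.norm_coe_le_norm x0 t) hx01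
  -- Urysohn
  obtain ⟨φ, hφ0, hφ1, hφ01⟩ := exists_continuous_zero_one_of_isClosed
    hWopen.isClosed_compl isClosed_singleton
    (Set.disjoint_singleton_right.2 (by simpa using ht1W))
  have hφt1 : φ t1 = 1 := hφ1 rfl
  -- the sign
  set c : ℝ := if 0 ≤ y t1 then 1 else -1 with hcdef
  have hc1 : |c| = 1 := by rw [hcdef]; split <;> norm_num
  -- the slice element
  set x : C(K, ℝ) := x0 + φ * (ContinuousMap.const K c - x0) with hxdef
  have hxt : ∀ t, x t = (1 - φ t) * x0 t + φ t * c := by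
    intro t
    simp only [hxdef, ContinuousMap.add_apply, ContinuousMap.mul_apply,
      ContinuousMap.sub_apply, ContinuousMap.const_apply]
    ring
  have hxnorm : ‖x‖ ≤ 1 := by
    refine (ContinuousMap.norm_le _ zero_le_one).2 fun t => ?_
    obtain ⟨hφa, hφb⟩ := hφ01 t
    rw [Real.norm_eq_abs, hxt t]
    calc |(1 - φ t) * x0 t + φ t * c| ≤ |(1 - φ t) * x0 t| + |φ t * c| := abs_add_le _ _
    _ = (1 - φ t) * |x0 t| + φ t * |c| := by
        rw [abs_mul, abs_mul, abs_of_nonneg (by linarith : (0:ℝ) ≤ 1 - φ t),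
          abs_of_nonneg hφa]
    _ ≤ (1 - φ t) * 1 + φ t * 1 := by
        rw [hc1]
        have := hx0t t
        nlinarith
    _ = 1 := by ring
  -- f x is in the slice
  set h : C(K, ℝ) := φ * (ContinuousMap.const K c - x0) with hhdef
  have hhW : ∀ t ∉ W, h t = 0 := by
    intro t ht
    simp only [hhdef, ContinuousMap.mul_apply, ContinuousMap.sub_apply,
      ContinuousMap.const_apply]
    rw [show φ t = 0 from hφ0 ht, zero_mul]
  have hhn : ∀ t, |h t| ≤ 2 := by
    intro t
    obtain ⟨hφa, hφb⟩ := hφ01 t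
    simp only [hhdef, ContinuousMap.mul_apply, ContinuousMap.sub_apply,
      ContinuousMap.const_apply]
    rw [abs_mul]
    have h1 : |c - x0 t| ≤ 2 := by
      have := hx0t t
      have := abs_sub_abs_le_abs_sub c (x0 t)
      calc |c - x0 t| ≤ |c| + |x0 t| := abs_sub _ _
      _ ≤ 1 + 1 := by rw [hc1]; linarith [hx0t t]
      _ = 2 := by norm_num
    have h2 : |φ t| ≤ 1 := by rw [abs_of_nonneg hφa]; exact hφb
    nlinarith [abs_nonneg (φ t), abs_nonneg (c - x0 t)]
  have hfh : -(a/4) < f h := by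
    set g : C(K, ℝ) := (-(2⁻¹ : ℝ)) • h with hgdef
    have hgn : ‖g‖ ≤ 1 := by
      refine (ContinuousMap.norm_le _ zero_le_one).2 fun t => ?_
      simp only [hgdef, ContinuousMap.smul_apply, smul_eq_mul, Real.norm_eq_abs, abs_mul]
      have := hhn t
      rw [abs_neg, abs_inv]
      norm_num
      linarith
    have hgW : ∀ t ∉ W, g t = 0 := by
      intro t ht
      simp only [hgdef, ContinuousMap.smul_apply, hhW t ht, smul_eq_mul, mul_zero]
    have := hlight g hgn hgW
    rw [hgdef, map_smul, smul_eq_mul] at this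
    linarith
  have hfx : ‖f‖ - a < f x := by
    have : f x = f x0 + f h := by rw [hxdef, hhdef, map_add]
    rw [this]
    linarith
  -- the norm estimate
  have hxt1 : x t1 = c := by rw [hxt t1, hφt1]; ring
  have hnorm2 : 2 - ε < ‖y + x‖ := by
    have hle : |y t1 + c| ≤ ‖y + x‖ := by
      have := ContinuousMap.norm_coe_le_norm (y + x) t1
      simpa [Real.norm_eq_abs, ContinuousMap.add_apply, hxt1] using this
    have ht1V' : 1 - ε < |y t1| := ht1V
    have : 1 + |y t1| ≤ |y t1 + c| := by
      rw [hcdef]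
      split
      · rw [abs_of_nonneg (by linarith [abs_of_nonneg ‹0 ≤ y t1›] : (0:ℝ) ≤ y t1 + 1)]
        rw [abs_of_nonneg ‹0 ≤ y t1›]
        linarith
      · push_neg at *
        rename_i hneg
        rw [abs_of_neg ‹y t1 < 0›]
        rw [abs_of_nonpos (by linarith : y t1 + -1 ≤ 0)]
        linarith
    linarith
  exact ⟨x, ⟨hxnorm, hfx⟩, hnorm2⟩

lemma exists_indic (a : K) (ha : IsOpen ({a} : Set K)) :
    ∃ y : C(K, ℝ), y a = 1 ∧ (∀ x : K, x ≠ a → y x = 0) ∧ ‖y‖ = 1 := by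
  classical
  have hcont : Continuous (Set.piecewise {a} (1 : K → ℝ) 0) := by
    refine Continuous.piecewise ?_ continuous_const continuous_const
    intro x hx
    rw [IsClopen.frontier_eq ⟨isClosed_singleton, ha⟩] at hx
    exact absurd hx (Set.notMem_empty x)
  refine ⟨⟨_, hcont⟩, ?_, ?_, ?_⟩
  · simp [Set.piecewise]
  · intro x hx; simp [Set.piecewise, hx]
  · refine le_antisymm ((ContinuousMap.norm_le _ zero_le_one).2 ?_) ?_
    · intro x
      by_cases hx : x = a <;> simp [Set.piecewise, hx]
    · have := ContinuousMap.norm_coe_le_norm (⟨_, hcont⟩ : C(K, ℝ)) a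
      simpa [Set.piecewise] using this

lemma min_norm_le (y : C(K, ℝ)) (a : K) (hy1 : y a = 1) (hy0 : ∀ x : K, x ≠ a → y x = 0)
    (f : C(K, ℝ)) (hf : ‖f‖ ≤ 1) : min ‖y + f‖ ‖y - f‖ ≤ 1 := by
  have hfx : ∀ x, |f x| ≤ 1 := fun x =>
    le_trans (ContinuousMap.norm_coe_le_norm f x) hf
  rcases le_or_gt 0 (f a) with hfa | hfa
  · refine le_trans (min_le_right _ _) ((ContinuousMap.norm_le _ zero_le_one).2 ?_)
    intro x
    by_cases hx : x = a
    · subst hx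
      have := hfx x
      simp only [ContinuousMap.sub_apply, hy1, Real.norm_eq_abs]
      rw [abs_le] at this ⊢
      constructor <;> linarith
    · have := hfx x
      simp only [ContinuousMap.sub_apply, hy0 x hx, Real.norm_eq_abs, zero_sub, abs_neg]
      exact this
  · refine le_trans (min_le_left _ _) ((ContinuousMap.norm_le _ zero_le_one).2 ?_)
    intro x
    by_cases hx : x = a
    · subst hx
      have := hfx x
      simp only [ContinuousMap.add_apply, hy1, Real.norm_eq_abs]
      rw [abs_le] at this ⊢
      constructor <;> linarith
    · have := hfx x
      simp only [ContinuousMap.add_apply, hy0 x hx, Real.norm_eq_abs, zero_add]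
      exact this

lemma not_daugavet_of_isolated (a : K) (y : C(K, ℝ)) (hy1 : y a = 1)
    (hy0 : ∀ x : K, x ≠ a → y x = 0) (hyn : ‖y‖ = 1) : ¬ HasDaugavetProp C(K, ℝ) := by
  intro hD
  haveI : Nonempty K := ⟨a⟩
  set f : C(K, ℝ) →L[ℝ] ℝ := ContinuousMap.evalCLM ℝ a with hfdef
  have hfapp : ∀ g : C(K, ℝ), f g = g a := fun g => rfl
  have hfnorm : 1 ≤ ‖f‖ := by
    have h1 : ‖(1 : C(K, ℝ))‖ = 1 := by
      exact norm_one
    have := f.le_opNorm (1 : C(K, ℝ))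
    rw [h1, mul_one, hfapp] at this
    simpa using this
  obtain ⟨x, ⟨hx1, hx2⟩, hx3⟩ := hD (-y) (by rw [norm_neg, hyn]) f (1/2) (by norm_num)
    (1/2) (by norm_num)
  rw [hfapp] at hx2
  have hxa : 1/2 < x a := by linarith
  have hxa' : x a ≤ 1 := le_trans (le_abs_self _) (le_trans (ContinuousMap.norm_coe_le_norm x a) hx1)
  have hbound : ‖-y + x‖ ≤ 1 := by
    refine (ContinuousMap.norm_le _ zero_le_one).2 ?_
    intro t
    by_cases ht : t = a
    · subst ht
      simp only [ContinuousMap.add_apply, ContinuousMap.neg_apply, hy1, Real.norm_eq_abs]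
      rw [abs_le]; constructor <;> linarith
    · simp only [ContinuousMap.add_apply, ContinuousMap.neg_apply, hy0 t ht, neg_zero, zero_add,
        Real.norm_eq_abs]
      exact le_trans (ContinuousMap.norm_coe_le_norm x t) hx1
  linarith


/-- `C(K)` has the Daugavet property if and only if the compact Hausdorff space `K` has
no isolated points; moreover, if `K` has an isolated point `a`, then some unit vector
`y` of `C(K)` (the indicator of `{a}`) satisfies `min ‖y + f‖ ‖y - f‖ ≤ 1` for every `f`
in the closed unit ball. -/
theorem ck_daugavet_iff_no_isolated (K : Type u) [TopologicalSpace K] [CompactSpace K]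
    [T2Space K] :
    (HasDaugavetProp C(K, ℝ) ↔ ∀ x : K, ¬ IsOpen ({x} : Set K)) ∧
      (∀ a : K, IsOpen ({a} : Set K) →
        ∃ y : C(K, ℝ), ‖y‖ = 1 ∧ (y a = 1 ∧ ∀ x : K, x ≠ a → y x = 0) ∧
          ∀ f : C(K, ℝ), ‖f‖ ≤ 1 → min ‖y + f‖ ‖y - f‖ ≤ 1) := by
  constructor
  · constructor
    · intro hD x hx
      obtain ⟨y, hy1, hy0, hyn⟩ := exists_indic x hx
      exact not_daugavet_of_isolated x y hy1 hy0 hyn hD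
    · exact daugavet_of_no_isolated
  · intro a ha
    obtain ⟨y, hy1, hy0, hyn⟩ := exists_indic a ha
    exact ⟨y, hyn, ⟨hy1, hy0⟩, fun f hf => min_norm_le y a hy1 hy0 f hf⟩
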